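/- Let X be an invertible N×N complex matrix, Y an M×N complex matrix, and P, R constant N×N matrices, Q a constant N×M matrix, satisfying R X + Q Y = X P. Let U, V be N×m-type matrices with Q = V U† (here with M=N, U and V are N×m). Then the m×m matrix φ = U† Y X^{-1} V satisfies tr(φ) = tr(P) - tr(R). -/
import Mathlib


open Matrix

theorem trace_identity {N m : ℕ}
    (X Y P R : Matrix (Fin N) (Fin N) ℂ) (Q : Matrix (Fin N) (Fin N) ℂ)
    (U V : Matrix (Fin N) (Fin m) ℂ)
    (hX : IsUnit X) (hRel : R * X + Q * Y = X * P) (hQ : Q = V * Uᴴ) :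
    Matrix.trace (Uᴴ * Y * X⁻¹ * V) = Matrix.trace P - Matrix.trace R := by
  have hXinv : X * X⁻¹ = 1 := mul_nonsing_inv X (isUnit_iff_isUnit_det X |>.mp hX)
  have h1 : Matrix.trace (Uᴴ * Y * X⁻¹ * V) = Matrix.trace (Q * Y * X⁻¹) := by
    rw [hQ, Matrix.trace_mul_comm (Uᴴ * Y * X⁻¹) V]
    simp [Matrix.mul_assoc]
  have hQY : Q * Y = X * P - R * X := by
    have := hRel
    linear_combination (norm := noncomm_ring) this
  rw [h1, hQY, Matrix.sub_mul, Matrix.trace_sub, Matrix.mul_assoc R X X⁻¹, hXinv,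
    Matrix.mul_one, Matrix.mul_assoc X P X⁻¹, Matrix.trace_mul_comm X (P * X⁻¹), Matrix.mul_assoc]
  rw [nonsing_inv_mul X (isUnit_iff_isUnit_det X |>.mp hX), Matrix.mul_one]
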